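/- Let n ≥ 1 be an integer, let λ₁,…,λₙ and μ₁,…,μₙ be positive real numbers, and let c be a real number, ε > 0, and B, t real numbers with B·t > 1. Suppose ∑_{i=1}^n μᵢ/λᵢ = n·c, ∑_{i=1}^n μᵢ/λᵢ² ≤ n·c + ε, and for every index k ∈ {1,…,n} one has ∑_{i≠k} μᵢ < n·c − B·t·ε. Then ∑_{k=1}^n λₖ/μₖ < 2n/((B·t − 1)·ε). -/

import Mathlib

theorem stmt_2 (n : ℕ) (hn : 1 ≤ n) (lam mu : Fin n → ℝ)
    (hlam : ∀ i, 0 < lam i) (hmu : ∀ i, 0 < mu i) (c ε B t : ℝ)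
    (hε : 0 < ε) (hBt : 1 < B * t)
    (h1 : ∑ i, mu i / lam i = n * c)
    (h2 : ∑ i, mu i / (lam i) ^ 2 ≤ n * c + ε)
    (h3 : ∀ k : Fin n, ∑ i ∈ Finset.univ.erase k, mu i < n * c - B * t * ε) :
    ∑ k, lam k / mu k < 2 * n / ((B * t - 1) * ε) := by
  have hX : 0 < (B * t - 1) * ε := by nlinarith
  have key : ∀ k : Fin n, lam k / mu k < 2 / ((B * t - 1) * ε) := by
    intro k
    -- split sums at k
    have e1 : mu k / lam k + ∑ i ∈ Finset.univ.erase k, mu i / lam i = n * c := by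
      rw [Finset.add_sum_erase Finset.univ (fun i => mu i / lam i) (Finset.mem_univ k)]; exact h1
    have e2 : mu k / lam k ^ 2 + ∑ i ∈ Finset.univ.erase k, mu i / lam i ^ 2
        ≤ n * c + ε := by
      rw [Finset.add_sum_erase Finset.univ (fun i => mu i / lam i ^ 2) (Finset.mem_univ k)]; exact h2
    -- pointwise AM-GM bound
    have hpt : ∀ i : Fin n, mu i / lam i ≤ (mu i + mu i / lam i ^ 2) / 2 := by
      intro i
      have hl := hlam i
      have hm := hmu i
      have e3 : mu i / lam i = mu i * (lam i)⁻¹ := div_eq_mul_inv _ _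
      have e4 : mu i / lam i ^ 2 = mu i * ((lam i)⁻¹) ^ 2 := by
        rw [div_eq_mul_inv, inv_pow]
      rw [e3, e4]
      nlinarith [mul_nonneg hm.le (sq_nonneg ((lam i)⁻¹ - 1))]
    have hsum : ∑ i ∈ Finset.univ.erase k, mu i / lam i
        ≤ (∑ i ∈ Finset.univ.erase k, mu i
            + ∑ i ∈ Finset.univ.erase k, mu i / lam i ^ 2) / 2 := by
      rw [← Finset.sum_add_distrib, Finset.sum_div]
      exact Finset.sum_le_sum fun i _ => hpt i
    have hk2 : 0 < mu k / lam k ^ 2 := div_pos (hmu k) (pow_pos (hlam k) 2)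
    have h3k := h3 k
    -- deduce lower bound on mu k / lam k
    have hlow : (B * t - 1) * ε / 2 < mu k / lam k := by linarith
    have hml : 0 < mu k / lam k := lt_trans (by linarith) hlow
    rw [div_lt_div_iff₀ (hmu k) hX]
    rw [div_lt_div_iff₀ (by norm_num : (0:ℝ) < 2) (hlam k)] at hlow
    nlinarith
  have hne : (Finset.univ : Finset (Fin n)).Nonempty :=
    ⟨⟨0, by omega⟩, Finset.mem_univ _⟩
  calc ∑ k, lam k / mu k < ∑ _k : Fin n, 2 / ((B * t - 1) * ε) :=
        Finset.sum_lt_sum_of_nonempty hne fun k _ => key k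
    _ = 2 * n / ((B * t - 1) * ε) := by
        rw [Finset.sum_const, Finset.card_univ, Fintype.card_fin, nsmul_eq_mul]
        ring
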